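/- The Berezin transform of the differentiation operator a(f) = f' on H_β equals ã(w) = βw + conj(w), where ã(w) = ⟨a(k_w), k_w⟩ and k_w(z) = K_β(z,w)/√(K_β(w,w)) is the normalized reproducing kernel. -/

import Mathlib

open MeasureTheory Real Complex

/-- The weight of `H_β`: `exp(-(1+β)x² - (1-β)y²)` for `z = x + iy`. -/
noncomputable def weightB (β : ℝ) (z : ℂ) : ℝ :=
  Real.exp (-((1 + β) * z.re ^ 2 + (1 - β) * z.im ^ 2))

/-- The Bergman kernel `K_β(z,w) = (1/π) exp(β(z² + w̄²)/2) exp(z w̄)`. -/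
noncomputable def Kb (β : ℝ) (z w : ℂ) : ℂ :=
  (1 / (Real.pi : ℂ)) * Complex.exp ((β : ℂ) * (z ^ 2 + (starRingEnd ℂ w) ^ 2) / 2) *
    Complex.exp (z * starRingEnd ℂ w)

/-- The normalized reproducing kernel `k_w = K_β(·,w)/√(K_β(w,w))`. -/
noncomputable def kb (β : ℝ) (w z : ℂ) : ℂ :=
  Kb β z w / (Real.sqrt ((Kb β w w).re) : ℂ)

lemma Kb_eq_exp (β : ℝ) (z w : ℂ) :
    Kb β z w = (1 / (Real.pi : ℂ)) *
      Complex.exp ((β : ℂ) * (z ^ 2 + (starRingEnd ℂ w) ^ 2) / 2 + z * starRingEnd ℂ w) := by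
  unfold Kb
  rw [mul_assoc, ← Complex.exp_add]

lemma Xre (β : ℝ) (z w : ℂ) :
    ((β : ℂ) * (z ^ 2 + (starRingEnd ℂ w) ^ 2) / 2 + z * starRingEnd ℂ w).re
      = β * (z.re ^ 2 - z.im ^ 2 + w.re ^ 2 - w.im ^ 2) / 2 + (z.re * w.re + z.im * w.im) := by
  have h : (β : ℂ) * (z ^ 2 + (starRingEnd ℂ w) ^ 2) / 2 + z * starRingEnd ℂ w
      = ((β / 2 : ℝ) : ℂ) * (z ^ 2 + (starRingEnd ℂ w) ^ 2) + z * starRingEnd ℂ w := by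
    push_cast; ring
  rw [h]
  simp [Complex.add_re, Complex.re_ofReal_mul, Complex.mul_re, Complex.mul_im, pow_two,
    Complex.conj_re, Complex.conj_im]
  ring

lemma Kww_re (β : ℝ) (w : ℂ) :
    (Kb β w w).re = Real.exp (β * (w.re ^ 2 - w.im ^ 2) + (w.re ^ 2 + w.im ^ 2)) / Real.pi := by
  have h : (β : ℂ) * (w ^ 2 + (starRingEnd ℂ w) ^ 2) / 2 + w * starRingEnd ℂ w
      = ((β * (w.re ^ 2 - w.im ^ 2) + (w.re ^ 2 + w.im ^ 2) : ℝ) : ℂ) := by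
    apply Complex.ext
    · rw [Xre]; simp [← Complex.ofReal_pow]; ring
    · simp [Complex.add_im, Complex.mul_im, pow_two, Complex.conj_re, Complex.conj_im]
      ring
  rw [Kb_eq_exp, h, ← Complex.ofReal_exp]
  rw [show (1 / (Real.pi : ℂ)) = ((1 / Real.pi : ℝ) : ℂ) by push_cast; ring]
  rw [← Complex.ofReal_mul, Complex.ofReal_re]
  ring

lemma Kww_re_pos (β : ℝ) (w : ℂ) : 0 < (Kb β w w).re := by
  rw [Kww_re]; positivity

lemma prod_eq (β : ℝ) (w z : ℂ) :
    Kb β z w * (starRingEnd ℂ) (Kb β z w) * (weightB β z : ℂ)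
      = (((Kb β w w).re : ℝ) : ℂ) * ((1 / (Real.pi : ℂ)) *
          Complex.exp (((-((z.re - w.re) ^ 2 + (z.im - w.im) ^ 2) : ℝ) : ℂ))) := by
  set X : ℂ := (β : ℂ) * (z ^ 2 + (starRingEnd ℂ w) ^ 2) / 2 + z * starRingEnd ℂ w with hXdef
  have h1 : Kb β z w = (1 / (Real.pi : ℂ)) * Complex.exp X := Kb_eq_exp β z w
  have h2 : (starRingEnd ℂ) (Kb β z w) = (1 / (Real.pi : ℂ)) * Complex.exp ((starRingEnd ℂ) X) := by
    rw [h1, map_mul, map_div₀, map_one, Complex.conj_ofReal, ← Complex.exp_conj]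
  rw [h2, h1, Kww_re]
  have hX : X.re = β * (z.re ^ 2 - z.im ^ 2 + w.re ^ 2 - w.im ^ 2) / 2
      + (z.re * w.re + z.im * w.im) := Xre β z w
  have hw : ((weightB β z : ℝ) : ℂ)
      = Complex.exp (((-((1 + β) * z.re ^ 2 + (1 - β) * z.im ^ 2)) : ℝ) : ℂ) := by
    rw [← Complex.ofReal_exp]; rfl
  rw [hw]
  have expand1 : ∀ a b c : ℂ, 1 / (Real.pi : ℂ) * cexp a * (1 / (Real.pi : ℂ) * cexp b) * cexp c
      = 1 / (Real.pi : ℂ) ^ 2 * cexp (a + b + c) := by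
    intro a b c; rw [Complex.exp_add, Complex.exp_add]; ring
  have expand2 : ∀ d e : ℂ, ((Real.exp d.re : ℝ) : ℂ) / (Real.pi : ℂ) * (1 / (Real.pi : ℂ) * cexp e)
      = 1 / (Real.pi : ℂ) ^ 2 * cexp ((d.re : ℂ) + e) := by
    intro d e; rw [Complex.exp_add, Complex.ofReal_exp]; ring
  rw [expand1]
  rw [show ((Real.exp (β * (w.re ^ 2 - w.im ^ 2) + (w.re ^ 2 + w.im ^ 2)) / Real.pi : ℝ) : ℂ)
        = ((Real.exp (β * (w.re ^ 2 - w.im ^ 2) + (w.re ^ 2 + w.im ^ 2)) : ℝ) : ℂ) / (Real.pi : ℂ) by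
      push_cast; ring]
  rw [show ((Real.exp (β * (w.re ^ 2 - w.im ^ 2) + (w.re ^ 2 + w.im ^ 2)) : ℝ) : ℂ) / (Real.pi : ℂ) *
        (1 / (Real.pi : ℂ) * cexp (((-((z.re - w.re) ^ 2 + (z.im - w.im) ^ 2) : ℝ) : ℂ)))
      = 1 / (Real.pi : ℂ) ^ 2 * cexp (((β * (w.re ^ 2 - w.im ^ 2) + (w.re ^ 2 + w.im ^ 2) : ℝ) : ℂ)
          + ((-((z.re - w.re) ^ 2 + (z.im - w.im) ^ 2) : ℝ) : ℂ)) by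
      rw [Complex.exp_add, Complex.ofReal_exp]; ring]
  congr 1
  congr 1
  rw [Complex.add_conj, hX]
  push_cast
  ring

lemma hasDerivAt_Kb (β : ℝ) (w z : ℂ) :
    HasDerivAt (fun ζ => Kb β ζ w) (((β : ℂ) * z + starRingEnd ℂ w) * Kb β z w) z := by
  have h1 : HasDerivAt (fun ζ : ℂ => (β : ℂ) * (ζ ^ 2 + (starRingEnd ℂ w) ^ 2) / 2)
      ((β : ℂ) * z) z := by
    have h := (((hasDerivAt_pow 2 z).add_const ((starRingEnd ℂ w) ^ 2)).const_mul
      ((β : ℂ))).div_const 2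
    refine h.congr_deriv ?_
    push_cast; ring
  have h2 : HasDerivAt (fun ζ : ℂ => ζ * starRingEnd ℂ w) (starRingEnd ℂ w) z := by
    simpa using (hasDerivAt_id z).mul_const (starRingEnd ℂ w)
  have h3 := (h1.cexp.const_mul ((1 : ℂ) / (Real.pi : ℂ))).mul h2.cexp
  refine h3.congr_deriv ?_
  unfold Kb
  ring

lemma deriv_kb (β : ℝ) (w z : ℂ) :
    deriv (fun ζ => kb β w ζ) z = ((β : ℂ) * z + starRingEnd ℂ w) * kb β w z := by
  have h : HasDerivAt (fun ζ => kb β w ζ)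
      ((((β : ℂ) * z + starRingEnd ℂ w) * Kb β z w) / (Real.sqrt ((Kb β w w).re) : ℂ)) z := by
    exact (hasDerivAt_Kb β w z).div_const _
  rw [h.deriv]
  unfold kb
  ring

lemma pointwise (β : ℝ) (w z : ℂ) :
    deriv (fun ζ => kb β w ζ) z * (starRingEnd ℂ) (kb β w z) * (weightB β z : ℂ)
      = (1 / (Real.pi : ℂ)) * (((β : ℂ) * z + starRingEnd ℂ w) *
          Complex.exp (((-((z.re - w.re) ^ 2 + (z.im - w.im) ^ 2) : ℝ) : ℂ))) := by
  rw [deriv_kb]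
  unfold kb
  have hr : 0 < (Kb β w w).re := Kww_re_pos β w
  have hc : ((Real.sqrt ((Kb β w w).re) : ℝ) : ℂ) * ((Real.sqrt ((Kb β w w).re) : ℝ) : ℂ)
      = (((Kb β w w).re : ℝ) : ℂ) := by
    rw [← Complex.ofReal_mul, Real.mul_self_sqrt hr.le]
  have hcne : ((Real.sqrt ((Kb β w w).re) : ℝ) : ℂ) ≠ 0 := by
    simp [Real.sqrt_ne_zero', hr]
  have hrne : (((Kb β w w).re : ℝ) : ℂ) ≠ 0 := by
    simpa using hr.ne'
  rw [map_div₀, Complex.conj_ofReal]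
  rw [show ((β : ℂ) * z + starRingEnd ℂ w) * (Kb β z w / (Real.sqrt ((Kb β w w).re) : ℂ)) *
        ((starRingEnd ℂ) (Kb β z w) / (Real.sqrt ((Kb β w w).re) : ℂ)) * (weightB β z : ℂ)
      = ((β : ℂ) * z + starRingEnd ℂ w) *
        (Kb β z w * (starRingEnd ℂ) (Kb β z w) * (weightB β z : ℂ)) /
        (((Real.sqrt ((Kb β w w).re) : ℝ) : ℂ) * ((Real.sqrt ((Kb β w w).re) : ℝ) : ℂ)) by
      ring]
  rw [hc, prod_eq]
  rw [div_eq_iff hrne]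
  ring

noncomputable def Gg : ℝ → ℂ := fun t => Complex.exp (((-(t ^ 2)) : ℝ) : ℂ)

noncomputable def Hh : ℝ → ℂ := fun t => (t : ℂ) * Complex.exp (((-(t ^ 2)) : ℝ) : ℂ)

lemma Gg_eq : Gg = fun t : ℝ => ((Real.exp (-(t ^ 2)) : ℝ) : ℂ) := by
  funext t; rw [Gg, Complex.ofReal_exp]

lemma Hh_eq : Hh = fun t : ℝ => ((t * Real.exp (-(t ^ 2)) : ℝ) : ℂ) := by
  funext t; rw [Hh]; push_cast; ring

lemma Gg_integrable : Integrable Gg := by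
  rw [Gg_eq]
  have h : Integrable (fun t : ℝ => Real.exp (-(t ^ 2))) := by
    simpa using integrable_exp_neg_mul_sq (one_pos)
  exact h.ofReal

lemma Hh_integrable : Integrable Hh := by
  rw [Hh_eq]
  have h : Integrable (fun t : ℝ => t * Real.exp (-(t ^ 2))) := by
    simpa using integrable_mul_exp_neg_mul_sq (one_pos)
  exact h.ofReal

lemma Gg_integral : ∫ t : ℝ, Gg t = ((Real.sqrt Real.pi : ℝ) : ℂ) := by
  simp only [Gg_eq]
  rw [show (∫ t : ℝ, ((Real.exp (-(t ^ 2)) : ℝ) : ℂ))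
      = ((∫ t : ℝ, Real.exp (-(t ^ 2)) : ℝ) : ℂ) from integral_ofReal]
  norm_cast
  rw [show (fun t : ℝ => Real.exp (-(t ^ 2))) = fun t : ℝ => Real.exp (-1 * t ^ 2) by
    funext t; ring_nf]
  rw [integral_gaussian]
  norm_num

lemma Hh_integral : ∫ t : ℝ, Hh t = 0 := by
  simp only [Hh_eq]
  rw [show (∫ t : ℝ, ((t * Real.exp (-(t ^ 2)) : ℝ) : ℂ))
      = ((∫ t : ℝ, t * Real.exp (-(t ^ 2)) : ℝ) : ℂ) from integral_ofReal]
  have h : ∫ t : ℝ, t * Real.exp (-(t ^ 2)) = 0 := by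
    have h2 := integral_neg_eq_self (fun t : ℝ => t * Real.exp (-(t ^ 2))) volume
    simp only [neg_neg, neg_sq] at h2
    have h3 : ∫ t : ℝ, -t * Real.exp (-t ^ 2) = ∫ t : ℝ, t * Real.exp (-(t ^ 2)) := h2
    have h4 : ∫ t : ℝ, -t * Real.exp (-t ^ 2) = -∫ t : ℝ, t * Real.exp (-(t ^ 2)) := by
      rw [← integral_neg]
      congr 1; funext t; ring_nf
    linarith [h3, h4]
  rw [h]
  norm_num


/-- the Berezin transform of `a(f) = f'` on `H_β` is
`ã(w) = ⟨a(k_w), k_w⟩ = βw + conj(w)`. -/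
theorem stmt_17 (β : ℝ) (hβ0 : 0 ≤ β) (hβ1 : β ≤ 1) (w : ℂ) :
    (∫ z : ℂ, deriv (fun ζ => kb β w ζ) z * (starRingEnd ℂ) (kb β w z) *
        (weightB β z : ℂ)) = (β : ℂ) * w + (starRingEnd ℂ) w := by
  have hπ : (Real.pi : ℂ) ≠ 0 := Complex.ofReal_ne_zero.mpr Real.pi_ne_zero
  rw [show (fun z : ℂ => deriv (fun ζ => kb β w ζ) z * (starRingEnd ℂ) (kb β w z) *
        (weightB β z : ℂ))
      = (fun z : ℂ => (1 / (Real.pi : ℂ)) * (((β : ℂ) * z + starRingEnd ℂ w) *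
          Complex.exp (((-((z.re - w.re) ^ 2 + (z.im - w.im) ^ 2) : ℝ) : ℂ))))
      from funext (pointwise β w)]
  rw [← integral_add_right_eq_self (fun z : ℂ => (1 / (Real.pi : ℂ)) *
      (((β : ℂ) * z + starRingEnd ℂ w) *
        Complex.exp (((-((z.re - w.re) ^ 2 + (z.im - w.im) ^ 2) : ℝ) : ℂ)))) w]
  rw [show (fun z : ℂ => (1 / (Real.pi : ℂ)) * (((β : ℂ) * (z + w) + starRingEnd ℂ w) *
        Complex.exp (((-(((z + w).re - w.re) ^ 2 + ((z + w).im - w.im) ^ 2) : ℝ) : ℂ))))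
      = (fun z : ℂ => (1 / (Real.pi : ℂ)) * (((β : ℂ) * z + ((β : ℂ) * w + starRingEnd ℂ w)) *
          Complex.exp (((-(z.re ^ 2 + z.im ^ 2) : ℝ) : ℂ)))) by
    funext z
    simp only [Complex.add_re, Complex.add_im, add_sub_cancel_right]
    ring]
  rw [← (Complex.volume_preserving_equiv_real_prod.symm).integral_comp
      Complex.measurableEquivRealProd.symm.measurableEmbedding]
  rw [show (fun p : ℝ × ℝ => (1 / (Real.pi : ℂ)) *
        (((β : ℂ) * (Complex.measurableEquivRealProd.symm p) +
            ((β : ℂ) * w + starRingEnd ℂ w)) *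
          Complex.exp (((-((Complex.measurableEquivRealProd.symm p).re ^ 2 +
            (Complex.measurableEquivRealProd.symm p).im ^ 2) : ℝ) : ℂ))))
      = (fun p : ℝ × ℝ => ((β : ℂ) / (Real.pi : ℂ)) * (Hh p.1 * Gg p.2)
          + ((β : ℂ) * Complex.I / (Real.pi : ℂ)) * (Gg p.1 * Hh p.2)
          + (((β : ℂ) * w + starRingEnd ℂ w) / (Real.pi : ℂ)) * (Gg p.1 * Gg p.2)) by
    funext p
    simp only [Complex.measurableEquivRealProd_symm_apply, Complex.add_re, Complex.add_im,
      Complex.ofReal_re, Complex.ofReal_im, Complex.mul_re, Complex.mul_im,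
      Complex.I_re, Complex.I_im]
    rw [Complex.mk_eq_add_mul_I]
    rw [show ((-(p.1 ^ 2 + p.2 ^ 2) : ℝ) : ℂ) = ((-(p.1 ^ 2) : ℝ) : ℂ) + ((-(p.2 ^ 2) : ℝ) : ℂ) by
      push_cast; ring]
    rw [Complex.exp_add]
    simp only [Gg, Hh]
    ring]
  have hGG : Integrable (fun p : ℝ × ℝ => Gg p.1 * Gg p.2) (volume.prod volume) :=
    Gg_integrable.mul_prod Gg_integrable
  have hHG : Integrable (fun p : ℝ × ℝ => Hh p.1 * Gg p.2) (volume.prod volume) :=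
    Hh_integrable.mul_prod Gg_integrable
  have hGH : Integrable (fun p : ℝ × ℝ => Gg p.1 * Hh p.2) (volume.prod volume) :=
    Gg_integrable.mul_prod Hh_integrable
  rw [MeasureTheory.Measure.volume_eq_prod]
  have h1 : Integrable (fun p : ℝ × ℝ => ((β : ℂ) / (Real.pi : ℂ)) * (Hh p.1 * Gg p.2))
      (volume.prod volume) := hHG.const_mul _
  have h2 : Integrable (fun p : ℝ × ℝ => ((β : ℂ) * Complex.I / (Real.pi : ℂ)) * (Gg p.1 * Hh p.2))
      (volume.prod volume) := hGH.const_mul _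
  have h3 : Integrable (fun p : ℝ × ℝ =>
      (((β : ℂ) * w + starRingEnd ℂ w) / (Real.pi : ℂ)) * (Gg p.1 * Gg p.2))
      (volume.prod volume) := hGG.const_mul _
  have h12 : Integrable (fun p : ℝ × ℝ => ((β : ℂ) / (Real.pi : ℂ)) * (Hh p.1 * Gg p.2)
      + ((β : ℂ) * Complex.I / (Real.pi : ℂ)) * (Gg p.1 * Hh p.2)) (volume.prod volume) :=
    h1.add h2
  rw [integral_add h12 h3, integral_add h1 h2]
  rw [integral_const_mul, integral_const_mul, integral_const_mul]
  rw [integral_prod_mul, integral_prod_mul, integral_prod_mul]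
  rw [Gg_integral, Hh_integral]
  rw [show ((Real.sqrt Real.pi : ℝ) : ℂ) * ((Real.sqrt Real.pi : ℝ) : ℂ) = ((Real.pi : ℝ) : ℂ) by
    rw [← Complex.ofReal_mul, Real.mul_self_sqrt Real.pi_pos.le]]
  field_simp
  ring
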